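/- Let k, n ∈ ℕ with n even, let t : Fin (n+k) → ℤ, let α : Fin (n+k) → ℝ with sin(α s) ≠ 0 for every s < n, and let ρ ∈ ℝ with |ρ| < 1. Write σ(ε) = #{l < n : ε l = 1} for a sign vector ε : Fin (n+k) → {−1,1}. Then ∑_{j=0}^{∞} ρ^j · ∏_{s<n} U_{j + t s}(cos(α s)) · ∏_{n ≤ s < n+k} T_{j + t s}(cos(α s)) = ((−1)^{n/2} / (2^{n+k} · ∏_{s<n} sin(α s))) · ∑_{ε} (−1)^{σ(ε)} · [cos(∑_{s<n} (ε s)(t s + 1)(α s) + ∑_{n ≤ s} (ε s)(t s)(α s)) − ρ·cos(∑_{s<n} (ε s)(t s)(α s) + ∑_{n ≤ s} (ε s)(t s − 1)(α s))] / (1 − 2ρ·cos(∑_{s} (ε s)(α s)) + ρ²), where ε runs over all functions Fin (n+k) → {−1,1}. -/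

import Mathlib

open Polynomial Complex

lemma sin_expand (x : ℂ) :
    Complex.sin x = ∑ e ∈ ({-1, 1} : Finset ℤ), ((e : ℂ) / (2 * I)) * Complex.exp ((e : ℂ) * x * I) := by
  rw [Finset.sum_pair (by norm_num), Complex.sin]
  simp only [div_eq_mul_inv, mul_inv, Complex.inv_I]
  push_cast
  ring

lemma cos_expand (x : ℂ) :
    Complex.cos x = ∑ e ∈ ({-1, 1} : Finset ℤ), (1 / 2 : ℂ) * Complex.exp ((e : ℂ) * x * I) := by
  rw [Finset.sum_pair (by norm_num), Complex.cos]
  push_cast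
  ring

lemma card_filter_lt (n k : ℕ) :
    (Finset.univ.filter (fun s : Fin (n + k) => (s : ℕ) < n)).card = n := by
  have e : {s : Fin (n + k) // (s : ℕ) < n} ≃ Fin n :=
    { toFun := fun s => ⟨s.1.1, s.2⟩
      invFun := fun i => ⟨⟨i.1, lt_of_lt_of_le i.2 (Nat.le_add_right n k)⟩, i.2⟩
      left_inv := fun s => rfl
      right_inv := fun i => rfl }
  rw [← Fintype.card_subtype]
  simpa using Fintype.card_congr e

lemma card_filter_not_lt (n k : ℕ) :
    (Finset.univ.filter (fun s : Fin (n + k) => ¬ (s : ℕ) < n)).card = k := by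
  have h := Finset.card_filter_add_card_filter_not
    (s := (Finset.univ : Finset (Fin (n + k)))) (p := fun s => (s : ℕ) < n)
  rw [card_filter_lt] at h
  simp only [Finset.card_univ, Fintype.card_fin] at h
  omega

lemma sum_piFinset_eq {m : ℕ} {M : Type*} [AddCommMonoid M]
    (f : (Fin m → ℤ) → M) :
    ∑ p ∈ Fintype.piFinset (fun _ : Fin m => ({-1, 1} : Finset ℤ)), f p
      = ∑ ε : Fin m → ({-1, 1} : Finset ℤ), f (fun s => (ε s : ℤ)) := by
  refine Finset.sum_nbij'
    (i := fun p => fun s => if h : p s ∈ ({-1, 1} : Finset ℤ) then (⟨p s, h⟩ : ({-1, 1} : Finset ℤ))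
      else ⟨1, by simp⟩)
    (j := fun ε => fun s => (ε s : ℤ)) ?_ ?_ ?_ ?_ ?_
  · intro p hp; exact Finset.mem_univ _
  · intro ε _; rw [Fintype.mem_piFinset]; intro s; exact (ε s).2
  · intro p hp
    rw [Fintype.mem_piFinset] at hp
    funext s; simp [hp s]
  · intro ε _
    funext s; simp [(ε s).2]
  · intro p hp
    rw [Fintype.mem_piFinset] at hp
    congr 1; funext s; simp [hp s]

lemma prod_sin_cos_expand (n k : ℕ) (x : Fin (n + k) → ℂ) :
    (∏ s ∈ Finset.univ.filter (fun s : Fin (n + k) => (s : ℕ) < n), Complex.sin (x s)) *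
      (∏ s ∈ Finset.univ.filter (fun s : Fin (n + k) => n ≤ (s : ℕ)), Complex.cos (x s))
    = ∑ ε : Fin (n + k) → ({-1, 1} : Finset ℤ),
        (∏ s ∈ Finset.univ.filter (fun s : Fin (n + k) => (s : ℕ) < n), ((ε s : ℤ) : ℂ)) *
          ((1 / (2 * I)) ^ n * (1 / 2 : ℂ) ^ k *
            Complex.exp ((∑ s, ((ε s : ℤ) : ℂ) * x s) * I)) := by
  have hfil : (Finset.univ.filter (fun s : Fin (n + k) => n ≤ (s : ℕ)))
      = (Finset.univ.filter (fun s : Fin (n + k) => ¬ (s : ℕ) < n)) := by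
    apply Finset.filter_congr; intro s _; simp [not_lt]
  rw [hfil]
  have lhs_eq : (∏ s ∈ Finset.univ.filter (fun s : Fin (n + k) => (s : ℕ) < n), Complex.sin (x s)) *
      (∏ s ∈ Finset.univ.filter (fun s : Fin (n + k) => ¬ (s : ℕ) < n), Complex.cos (x s))
      = ∏ s : Fin (n + k), (if (s : ℕ) < n then Complex.sin (x s) else Complex.cos (x s)) := by
    rw [← Finset.prod_filter_mul_prod_filter_not Finset.univ (fun s : Fin (n + k) => (s : ℕ) < n)]
    congr 1
    · exact Finset.prod_congr rfl fun s hs => by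
        simp only [Finset.mem_filter] at hs; rw [if_pos hs.2]
    · exact Finset.prod_congr rfl fun s hs => by
        simp only [Finset.mem_filter] at hs; rw [if_neg hs.2]
  rw [lhs_eq]
  have step2 : ∀ s : Fin (n + k),
      (if (s : ℕ) < n then Complex.sin (x s) else Complex.cos (x s))
      = ∑ e ∈ ({-1, 1} : Finset ℤ),
          (if (s : ℕ) < n then (e : ℂ) / (2 * I) else (1 / 2 : ℂ)) * Complex.exp ((e : ℂ) * x s * I) := by
    intro s
    by_cases h : (s : ℕ) < n
    · simp only [h, if_true]; exact sin_expand (x s)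
    · simp only [h, if_false]; exact cos_expand (x s)
  simp_rw [step2]
  rw [Finset.prod_univ_sum, sum_piFinset_eq]
  refine Finset.sum_congr rfl fun ε _ => ?_
  rw [Finset.prod_mul_distrib, ← Complex.exp_sum]
  have hcoef : (∏ s : Fin (n + k), (if (s : ℕ) < n then ((ε s : ℤ) : ℂ) / (2 * I) else (1 / 2 : ℂ)))
      = (∏ s ∈ Finset.univ.filter (fun s : Fin (n + k) => (s : ℕ) < n), ((ε s : ℤ) : ℂ)) *
          ((1 / (2 * I)) ^ n * (1 / 2 : ℂ) ^ k) := by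
    rw [Finset.prod_ite, Finset.prod_const, card_filter_not_lt]
    have : ∀ s ∈ Finset.univ.filter (fun s : Fin (n + k) => (s : ℕ) < n),
        ((ε s : ℤ) : ℂ) / (2 * I) = ((ε s : ℤ) : ℂ) * (1 / (2 * I)) := by
      intro s _; ring
    rw [Finset.prod_congr rfl this, Finset.prod_mul_distrib, Finset.prod_const, card_filter_lt]
    ring
  rw [hcoef]
  have hsum : (∑ s : Fin (n + k), ((ε s : ℤ) : ℂ) * x s * I)
      = (∑ s : Fin (n + k), ((ε s : ℤ) : ℂ) * x s) * I := by
    rw [Finset.sum_mul]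
  rw [hsum]
  ring

lemma one_sub_ne (ρ b : ℝ) (hρ : |ρ| < 1) : (1 - (ρ : ℂ) * Complex.exp (b * I)) ≠ 0 := by
  intro h
  rw [sub_eq_zero] at h
  have h2 : ‖(ρ:ℂ) * Complex.exp (b * I)‖ = 1 := by rw [← h]; simp
  rw [norm_mul, Complex.norm_exp_ofReal_mul_I, mul_one, Complex.norm_real, Real.norm_eq_abs] at h2
  exact absurd h2 (ne_of_lt hρ)

lemma denom_pos (ρ b : ℝ) (hρ : |ρ| < 1) : 0 < 1 - 2 * ρ * Real.cos b + ρ ^ 2 := by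
  have h3 : 2 * ρ * Real.cos b ≤ 2 * |ρ| := by
    calc 2 * ρ * Real.cos b ≤ |2 * ρ * Real.cos b| := le_abs_self _
    _ = 2 * |ρ| * |Real.cos b| := by rw [abs_mul, abs_mul, _root_.abs_two]
    _ ≤ 2 * |ρ| * 1 := by have := Real.abs_cos_le_one b; nlinarith [abs_nonneg ρ]
    _ = 2 * |ρ| := mul_one _
  have h4 : 0 < (1 - |ρ|) ^ 2 := pow_pos (by linarith) 2
  nlinarith [_root_.sq_abs ρ]

lemma pair_real (a b ρ : ℝ) (hρ : |ρ| < 1) :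
    Complex.exp (a * I) / (1 - ρ * Complex.exp (b * I))
      + Complex.exp (-a * I) / (1 - ρ * Complex.exp (-b * I))
    = ((2 * (Real.cos a - ρ * Real.cos (a - b)))
        / (1 - 2 * ρ * Real.cos b + ρ ^ 2) : ℝ) := by
  have hD : (1 - 2 * ρ * Real.cos b + ρ ^ 2) ≠ 0 := ne_of_gt (denom_pos ρ b hρ)
  have h1 : (1 - (ρ : ℂ) * Complex.exp (b * I)) ≠ 0 := one_sub_ne ρ b hρ
  have h2 : (1 - (ρ : ℂ) * Complex.exp ((-b : ℝ) * I)) ≠ 0 := one_sub_ne ρ (-b) hρ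
  have h2' : (1 - (ρ : ℂ) * Complex.exp (-(b : ℂ) * I)) ≠ 0 := by push_cast at h2; exact h2
  have hDc : ((1 - 2 * ρ * Real.cos b + ρ ^ 2 : ℝ) : ℂ) ≠ 0 := by exact_mod_cast hD
  have hinv : Complex.exp ((b:ℂ) * I) * Complex.exp (-(b:ℂ) * I) = 1 := by
    rw [← Complex.exp_add]; ring_nf; exact Complex.exp_zero
  have key : ((1 - 2 * ρ * Real.cos b + ρ ^ 2 : ℝ) : ℂ)
      = (1 - ρ * Complex.exp (b * I)) * (1 - ρ * Complex.exp (-(b : ℂ) * I)) := by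
    push_cast [Complex.ofReal_cos]
    rw [Complex.cos]
    linear_combination (-(ρ:ℂ)^2) * hinv
  rw [Complex.ofReal_div, key]
  rw [div_add_div _ _ h1 h2']
  congr 1
  push_cast [Complex.ofReal_cos]
  rw [Complex.cos, Complex.cos]
  have e1 : Complex.exp (((a:ℂ) - b) * I) = Complex.exp ((a:ℂ)*I) * Complex.exp (-(b:ℂ)*I) := by
    rw [← Complex.exp_add]; ring_nf
  have e2 : Complex.exp (-((a:ℂ) - b) * I) = Complex.exp (-(a:ℂ)*I) * Complex.exp ((b:ℂ)*I) := by
    rw [← Complex.exp_add]; ring_nf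
  rw [e1, e2]
  ring

def negE {m : ℕ} : (Fin m → ({-1, 1} : Finset ℤ)) ≃ (Fin m → ({-1, 1} : Finset ℤ)) where
  toFun ε s := ⟨-(ε s : ℤ), by
    have h := (ε s).2
    simp only [Finset.mem_insert, Finset.mem_singleton] at h ⊢
    rcases h with h | h <;> simp [h]⟩
  invFun ε s := ⟨-(ε s : ℤ), by
    have h := (ε s).2
    simp only [Finset.mem_insert, Finset.mem_singleton] at h ⊢
    rcases h with h | h <;> simp [h]⟩
  left_inv ε := by funext s; exact Subtype.ext (by simp)
  right_inv ε := by funext s; exact Subtype.ext (by simp)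

lemma card_compl (n k : ℕ) (ε : Fin (n + k) → ({-1, 1} : Finset ℤ)) :
    (Finset.univ.filter (fun l : Fin (n + k) => (l : ℕ) < n ∧ ¬ (ε l : ℤ) = 1)).card
      + (Finset.univ.filter (fun l : Fin (n + k) => (l : ℕ) < n ∧ (ε l : ℤ) = 1)).card = n := by
  classical
  have hcard := Finset.card_filter_add_card_filter_not
    (s := Finset.univ.filter (fun s : Fin (n + k) => (s : ℕ) < n))
    (p := fun l => (ε l : ℤ) = 1)
  rw [card_filter_lt, Finset.filter_filter, Finset.filter_filter] at hcard
  omega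

lemma neg_one_pow_compl {K : Type*} [Field K] (n a b : ℕ) (hn : Even n) (hab : a + b = n) :
    (-1 : K) ^ a = (-1 : K) ^ b := by
  have h1 : (-1 : K) ^ a * (-1) ^ b = 1 := by
    rw [← pow_add, hab]; exact hn.neg_one_pow
  have h2 : (-1 : K) ^ b * (-1) ^ b = 1 := by
    rw [← pow_add]; exact Even.neg_one_pow ⟨b, rfl⟩
  have hne : (-1 : K) ^ b ≠ 0 := by
    apply pow_ne_zero; norm_num
  exact mul_right_cancel₀ hne (h1.trans h2.symm)

lemma prod_signs (n k : ℕ) (hn : Even n) (ε : Fin (n + k) → ({-1, 1} : Finset ℤ)) :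
    (∏ s ∈ Finset.univ.filter (fun s : Fin (n + k) => (s : ℕ) < n), ((ε s : ℤ) : ℂ))
    = (-1 : ℂ) ^ (Finset.univ.filter
        (fun l : Fin (n + k) => (l : ℕ) < n ∧ (ε l : ℤ) = 1)).card := by
  classical
  have h1 : ∀ s ∈ Finset.univ.filter (fun s : Fin (n + k) => (s : ℕ) < n),
      ((ε s : ℤ) : ℂ) = (if (ε s : ℤ) = 1 then (1 : ℂ) else -1) := by
    intro s _
    have h := (ε s).2
    simp only [Finset.mem_insert, Finset.mem_singleton] at h
    rcases h with h | h <;> simp [h]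
  rw [Finset.prod_congr rfl h1, Finset.prod_ite, Finset.prod_const, Finset.prod_const,
    one_pow, one_mul, Finset.filter_filter]
  exact neg_one_pow_compl n _ _ hn (card_compl n k ε)

lemma sign_card_neg (n k : ℕ) (hn : Even n) (ε : Fin (n + k) → ({-1, 1} : Finset ℤ)) :
    (-1 : ℝ) ^ (Finset.univ.filter
        (fun l : Fin (n + k) => (l : ℕ) < n ∧ ((negE ε) l : ℤ) = 1)).card
    = (-1 : ℝ) ^ (Finset.univ.filter
        (fun l : Fin (n + k) => (l : ℕ) < n ∧ (ε l : ℤ) = 1)).card := by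
  classical
  have hfil : (Finset.univ.filter (fun l : Fin (n + k) => (l : ℕ) < n ∧ ((negE ε) l : ℤ) = 1))
      = (Finset.univ.filter (fun l : Fin (n + k) => (l : ℕ) < n ∧ ¬ (ε l : ℤ) = 1)) := by
    apply Finset.filter_congr
    intro l _
    have h : ((negE ε) l : ℤ) = -(ε l : ℤ) := rfl
    have hm := (ε l).2
    simp only [Finset.mem_insert, Finset.mem_singleton] at hm
    rcases hm with hm | hm <;> simp [h, hm]
  rw [hfil]
  exact neg_one_pow_compl n _ _ hn (card_compl n k ε)


noncomputable def thF (n k : ℕ) (α : Fin (n + k) → ℝ) (ε : Fin (n + k) → ({-1, 1} : Finset ℤ)) : ℝ :=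
  ∑ s, ((ε s : ℤ) : ℝ) * α s

noncomputable def phF (n k : ℕ) (t : Fin (n + k) → ℤ) (α : Fin (n + k) → ℝ)
    (ε : Fin (n + k) → ({-1, 1} : Finset ℤ)) : ℝ :=
  (∑ s ∈ Finset.univ.filter (fun s : Fin (n + k) => (s : ℕ) < n),
      ((ε s : ℤ) : ℝ) * ((t s : ℝ) + 1) * α s) +
    ∑ s ∈ Finset.univ.filter (fun s : Fin (n + k) => n ≤ (s : ℕ)),
      ((ε s : ℤ) : ℝ) * (t s : ℝ) * α s

noncomputable def psF (n k : ℕ) (t : Fin (n + k) → ℤ) (α : Fin (n + k) → ℝ)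
    (ε : Fin (n + k) → ({-1, 1} : Finset ℤ)) : ℝ :=
  (∑ s ∈ Finset.univ.filter (fun s : Fin (n + k) => (s : ℕ) < n),
      ((ε s : ℤ) : ℝ) * (t s : ℝ) * α s) +
    ∑ s ∈ Finset.univ.filter (fun s : Fin (n + k) => n ≤ (s : ℕ)),
      ((ε s : ℤ) : ℝ) * ((t s : ℝ) - 1) * α s

noncomputable def cF (n k : ℕ) (ε : Fin (n + k) → ({-1, 1} : Finset ℤ)) : ℝ :=
  (-1 : ℝ) ^ (Finset.univ.filter
    (fun l : Fin (n + k) => (l : ℕ) < n ∧ (ε l : ℤ) = 1)).card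

lemma hfil' (n k : ℕ) : (Finset.univ.filter (fun s : Fin (n + k) => n ≤ (s : ℕ)))
    = (Finset.univ.filter (fun s : Fin (n + k) => ¬ (s : ℕ) < n)) := by
  apply Finset.filter_congr; intro s _; simp [not_lt]

-- ψ = φ - θ
lemma psF_eq (n k : ℕ) (t : Fin (n + k) → ℤ) (α : Fin (n + k) → ℝ)
    (ε : Fin (n + k) → ({-1, 1} : Finset ℤ)) :
    psF n k t α ε = phF n k t α ε - thF n k α ε := by
  rw [psF, phF, thF]
  rw [← Finset.sum_filter_add_sum_filter_not Finset.univ (fun s : Fin (n + k) => (s : ℕ) < n)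
    (fun s => ((ε s : ℤ) : ℝ) * α s)]
  rw [hfil' n k]
  rw [add_sub_add_comm, ← Finset.sum_sub_distrib, ← Finset.sum_sub_distrib]
  congr 1 <;> exact Finset.sum_congr rfl fun s _ => by ring

-- θ, φ, c under negation
lemma thF_neg (n k : ℕ) (α : Fin (n + k) → ℝ) (ε : Fin (n + k) → ({-1, 1} : Finset ℤ)) :
    thF n k α (negE ε) = - thF n k α ε := by
  rw [thF, thF, ← Finset.sum_neg_distrib]
  exact Finset.sum_congr rfl fun s _ => by
    have h : ((negE ε) s : ℤ) = -(ε s : ℤ) := rfl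
    rw [h]; push_cast; ring

lemma phF_neg (n k : ℕ) (t : Fin (n + k) → ℤ) (α : Fin (n + k) → ℝ)
    (ε : Fin (n + k) → ({-1, 1} : Finset ℤ)) :
    phF n k t α (negE ε) = - phF n k t α ε := by
  rw [phF, phF, neg_add, ← Finset.sum_neg_distrib, ← Finset.sum_neg_distrib]
  congr 1 <;> exact Finset.sum_congr rfl fun s _ => by
    have h : ((negE ε) s : ℤ) = -(ε s : ℤ) := rfl
    rw [h]; push_cast; ring

lemma cF_neg (n k : ℕ) (hn : Even n) (ε : Fin (n + k) → ({-1, 1} : Finset ℤ)) :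
    cF n k (negE ε) = cF n k ε := by
  rw [cF, cF]; exact sign_card_neg n k hn ε

lemma hterm (n k : ℕ) (t : Fin (n + k) → ℤ) (α : Fin (n + k) → ℝ) (ρ : ℝ) (j : ℕ) :
    (∏ s ∈ Finset.univ.filter (fun s : Fin (n + k) => (s : ℕ) < n), Real.sin (α s)) *
      (ρ ^ j *
        (∏ s ∈ Finset.univ.filter (fun s : Fin (n + k) => (s : ℕ) < n),
          (Chebyshev.U ℝ ((j : ℤ) + t s)).eval (Real.cos (α s))) *
        (∏ s ∈ Finset.univ.filter (fun s : Fin (n + k) => n ≤ (s : ℕ)),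
          (Chebyshev.T ℝ ((j : ℤ) + t s)).eval (Real.cos (α s))))
    = ρ ^ j *
        (∏ s ∈ Finset.univ.filter (fun s : Fin (n + k) => (s : ℕ) < n),
          Real.sin (((((j : ℤ) + t s : ℤ) : ℝ) + 1) * α s)) *
        (∏ s ∈ Finset.univ.filter (fun s : Fin (n + k) => n ≤ (s : ℕ)),
          Real.cos ((((j : ℤ) + t s : ℤ) : ℝ) * α s)) := by
  have hU : ∀ s ∈ Finset.univ.filter (fun s : Fin (n + k) => (s : ℕ) < n),
      (Chebyshev.U ℝ ((j : ℤ) + t s)).eval (Real.cos (α s)) * Real.sin (α s)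
        = Real.sin (((((j : ℤ) + t s : ℤ) : ℝ) + 1) * α s) :=
    fun s _ => Chebyshev.U_real_cos (α s) _
  have hT : ∀ s ∈ Finset.univ.filter (fun s : Fin (n + k) => n ≤ (s : ℕ)),
      (Chebyshev.T ℝ ((j : ℤ) + t s)).eval (Real.cos (α s))
        = Real.cos ((((j : ℤ) + t s : ℤ) : ℝ) * α s) :=
    fun s _ => Chebyshev.T_real_cos (α s) _
  rw [← Finset.prod_congr rfl hU, ← Finset.prod_congr rfl hT, Finset.prod_mul_distrib]
  ring

lemma hexp_real (n k : ℕ) (t : Fin (n + k) → ℤ) (α : Fin (n + k) → ℝ)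
    (ε : Fin (n + k) → ({-1, 1} : Finset ℤ)) (j : ℕ) :
    ∑ s : Fin (n + k), ((ε s : ℤ) : ℝ) *
        (if (s : ℕ) < n then ((((j : ℤ) + t s : ℤ) : ℝ) + 1) * α s
          else (((j : ℤ) + t s : ℤ) : ℝ) * α s)
    = phF n k t α ε + j * thF n k α ε := by
  rw [phF, thF]
  rw [← Finset.sum_filter_add_sum_filter_not Finset.univ (fun s : Fin (n + k) => (s : ℕ) < n)
    (fun s => ((ε s : ℤ) : ℝ) *
        (if (s : ℕ) < n then ((((j : ℤ) + t s : ℤ) : ℝ) + 1) * α s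
          else (((j : ℤ) + t s : ℤ) : ℝ) * α s))]
  rw [← Finset.sum_filter_add_sum_filter_not Finset.univ (fun s : Fin (n + k) => (s : ℕ) < n)
    (fun s => ((ε s : ℤ) : ℝ) * α s)]
  rw [hfil' n k, mul_add, Finset.mul_sum, Finset.mul_sum, add_add_add_comm]
  rw [← Finset.sum_add_distrib, ← Finset.sum_add_distrib]
  congr 1
  · refine Finset.sum_congr rfl fun s hs => ?_
    simp only [Finset.mem_filter] at hs
    rw [if_pos hs.2]
    push_cast
    ring
  · refine Finset.sum_congr rfl fun s hs => ?_
    simp only [Finset.mem_filter] at hs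
    rw [if_neg hs.2]
    push_cast
    ring

lemma hj (n k : ℕ) (hn : Even n) (t : Fin (n + k) → ℤ) (α : Fin (n + k) → ℝ) (ρ : ℝ) (j : ℕ) :
    (((∏ s ∈ Finset.univ.filter (fun s : Fin (n + k) => (s : ℕ) < n), Real.sin (α s)) *
      (ρ ^ j *
        (∏ s ∈ Finset.univ.filter (fun s : Fin (n + k) => (s : ℕ) < n),
          (Chebyshev.U ℝ ((j : ℤ) + t s)).eval (Real.cos (α s))) *
        (∏ s ∈ Finset.univ.filter (fun s : Fin (n + k) => n ≤ (s : ℕ)),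
          (Chebyshev.T ℝ ((j : ℤ) + t s)).eval (Real.cos (α s)))) : ℝ) : ℂ)
    = ∑ ε : Fin (n + k) → ({-1, 1} : Finset ℤ),
        ((cF n k ε : ℝ) : ℂ) *
          ((1 / (2 * I)) ^ n * (1 / 2 : ℂ) ^ k * Complex.exp (((phF n k t α ε : ℝ) : ℂ) * I)) *
          ((ρ : ℂ) * Complex.exp (((thF n k α ε : ℝ) : ℂ) * I)) ^ j := by
  rw [hterm n k t α ρ j]
  set x : Fin (n + k) → ℝ := fun s =>
    if (s : ℕ) < n then ((((j : ℤ) + t s : ℤ) : ℝ) + 1) * α s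
      else (((j : ℤ) + t s : ℤ) : ℝ) * α s with hx
  rw [Complex.ofReal_mul, Complex.ofReal_mul, Complex.ofReal_pow, Complex.ofReal_prod,
    Complex.ofReal_prod]
  have hA : (∏ s ∈ Finset.univ.filter (fun s : Fin (n + k) => (s : ℕ) < n),
      ((Real.sin (((((j : ℤ) + t s : ℤ) : ℝ) + 1) * α s) : ℝ) : ℂ))
      = ∏ s ∈ Finset.univ.filter (fun s : Fin (n + k) => (s : ℕ) < n),
        Complex.sin ((x s : ℝ) : ℂ) := by
    refine Finset.prod_congr rfl fun s hs => ?_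
    simp only [Finset.mem_filter] at hs
    rw [Complex.ofReal_sin, hx]
    simp only [if_pos hs.2]
  have hB : (∏ s ∈ Finset.univ.filter (fun s : Fin (n + k) => n ≤ (s : ℕ)),
      ((Real.cos ((((j : ℤ) + t s : ℤ) : ℝ) * α s) : ℝ) : ℂ))
      = ∏ s ∈ Finset.univ.filter (fun s : Fin (n + k) => n ≤ (s : ℕ)),
        Complex.cos ((x s : ℝ) : ℂ) := by
    refine Finset.prod_congr rfl fun s hs => ?_
    simp only [Finset.mem_filter, not_lt] at hs
    rw [Complex.ofReal_cos, hx]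
    simp only [if_neg (not_lt.mpr hs.2)]
  rw [hA, hB, mul_assoc, prod_sin_cos_expand n k (fun s => ((x s : ℝ) : ℂ)), Finset.mul_sum]
  refine Finset.sum_congr rfl fun ε _ => ?_
  rw [prod_signs n k hn ε]
  have hexp : (∑ s : Fin (n + k), ((ε s : ℤ) : ℂ) * ((x s : ℝ) : ℂ))
      = ((phF n k t α ε : ℝ) : ℂ) + (j : ℂ) * ((thF n k α ε : ℝ) : ℂ) := by
    have h1 : (∑ s : Fin (n + k), ((ε s : ℤ) : ℂ) * ((x s : ℝ) : ℂ))
        = (((∑ s : Fin (n + k), ((ε s : ℤ) : ℝ) * x s) : ℝ) : ℂ) := by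
      push_cast
      rfl
    rw [h1, hx]
    rw [hexp_real n k t α ε j]
    push_cast
    rfl
  rw [hexp, add_mul, Complex.exp_add, mul_assoc ((j : ℂ)), Complex.exp_nat_mul]
  have hcF : ((cF n k ε : ℝ) : ℂ) = (-1 : ℂ) ^ (Finset.univ.filter
      (fun l : Fin (n + k) => (l : ℕ) < n ∧ (ε l : ℤ) = 1)).card := by
    rw [cF]; push_cast; rfl
  rw [hcF, mul_pow]
  ring

lemma pairing (n k : ℕ) (hn : Even n) (t : Fin (n + k) → ℤ) (α : Fin (n + k) → ℝ)
    (ρ : ℝ) (hρ : |ρ| < 1) :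
    (∑ ε : Fin (n + k) → ({-1, 1} : Finset ℤ),
      ((cF n k ε : ℝ) : ℂ) *
        (Complex.exp (((phF n k t α ε : ℝ) : ℂ) * I) *
          (1 - (ρ : ℂ) * Complex.exp (((thF n k α ε : ℝ) : ℂ) * I))⁻¹))
    = ∑ ε : Fin (n + k) → ({-1, 1} : Finset ℤ),
        ((cF n k ε : ℝ) : ℂ) *
          (((Real.cos (phF n k t α ε) - ρ * Real.cos (psF n k t α ε)) /
            (1 - 2 * ρ * Real.cos (thF n k α ε) + ρ ^ 2) : ℝ) : ℂ) := by
  classical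
  set F : (Fin (n + k) → ({-1, 1} : Finset ℤ)) → ℂ := fun ε =>
    ((cF n k ε : ℝ) : ℂ) *
      (Complex.exp (((phF n k t α ε : ℝ) : ℂ) * I) *
        (1 - (ρ : ℂ) * Complex.exp (((thF n k α ε : ℝ) : ℂ) * I))⁻¹) with hF
  apply mul_left_cancel₀ (two_ne_zero (α := ℂ))
  have hre : (∑ ε, F ε) = ∑ ε, F (negE ε) :=
    (Fintype.sum_equiv negE (fun ε => F (negE ε)) F (fun ε => rfl)).symm
  calc (2 : ℂ) * ∑ ε, F ε = (∑ ε, F ε) + ∑ ε, F (negE ε) := by rw [← hre]; ring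
  _ = ∑ ε, (F ε + F (negE ε)) := by rw [Finset.sum_add_distrib]
  _ = ∑ ε : Fin (n + k) → ({-1, 1} : Finset ℤ),
        (2 : ℂ) * (((cF n k ε : ℝ) : ℂ) *
          (((Real.cos (phF n k t α ε) - ρ * Real.cos (psF n k t α ε)) /
            (1 - 2 * ρ * Real.cos (thF n k α ε) + ρ ^ 2) : ℝ) : ℂ)) := by
      refine Finset.sum_congr rfl fun ε _ => ?_
      have h := pair_real (phF n k t α ε) (thF n k α ε) ρ hρ
      rw [← psF_eq n k t α ε] at h
      have step1 : F ε + F (negE ε)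
          = ((cF n k ε : ℝ) : ℂ) *
            (Complex.exp (((phF n k t α ε : ℝ) : ℂ) * I) /
              (1 - (ρ : ℂ) * Complex.exp (((thF n k α ε : ℝ) : ℂ) * I)) +
             Complex.exp (-((phF n k t α ε : ℝ) : ℂ) * I) /
              (1 - (ρ : ℂ) * Complex.exp (-((thF n k α ε : ℝ) : ℂ) * I))) := by
        rw [hF]
        simp only [cF_neg n k hn, thF_neg, phF_neg, Complex.ofReal_neg]
        ring
      rw [step1, h]
      push_cast
      ring
  _ = (2 : ℂ) * ∑ ε : Fin (n + k) → ({-1, 1} : Finset ℤ),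
        ((cF n k ε : ℝ) : ℂ) *
          (((Real.cos (phF n k t α ε) - ρ * Real.cos (psF n k t α ε)) /
            (1 - 2 * ρ * Real.cos (thF n k α ε) + ρ ^ 2) : ℝ) : ℂ) := by
      rw [Finset.mul_sum]

lemma core (k n : ℕ) (hn : Even n) (t : Fin (n + k) → ℤ) (α : Fin (n + k) → ℝ)
    (ρ : ℝ) (hρ : |ρ| < 1) :
    (2 : ℝ) ^ (n + k) *
      ((∏ s ∈ Finset.univ.filter (fun s : Fin (n + k) => (s : ℕ) < n), Real.sin (α s)) *
        ∑' j : ℕ, ρ ^ j *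
          (∏ s ∈ Finset.univ.filter (fun s : Fin (n + k) => (s : ℕ) < n),
            (Chebyshev.U ℝ ((j : ℤ) + t s)).eval (Real.cos (α s))) *
          (∏ s ∈ Finset.univ.filter (fun s : Fin (n + k) => n ≤ (s : ℕ)),
            (Chebyshev.T ℝ ((j : ℤ) + t s)).eval (Real.cos (α s))))
    = (-1 : ℝ) ^ (n / 2) *
        ∑ ε : Fin (n + k) → ({-1, 1} : Finset ℤ),
          cF n k ε *
            ((Real.cos (phF n k t α ε) - ρ * Real.cos (psF n k t α ε)) /
              (1 - 2 * ρ * Real.cos (thF n k α ε) + ρ ^ 2)) := by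
  classical
  have hw : ∀ ε : Fin (n + k) → ({-1, 1} : Finset ℤ),
      ‖(ρ : ℂ) * Complex.exp (((thF n k α ε : ℝ) : ℂ) * I)‖ < 1 := by
    intro ε
    rw [norm_mul, Complex.norm_real, Real.norm_eq_abs,
      Complex.norm_exp_ofReal_mul_I, mul_one]
    exact hρ
  rw [← tsum_mul_left]
  apply Complex.ofReal_injective
  rw [Complex.ofReal_mul, Complex.ofReal_tsum]
  rw [tsum_congr (fun j => hj n k hn t α ρ j)]
  have hsm : ∀ ε ∈ (Finset.univ : Finset (Fin (n + k) → ({-1, 1} : Finset ℤ))), Summable (fun j : ℕ =>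
      ((cF n k ε : ℝ) : ℂ) *
        ((1 / (2 * I)) ^ n * (1 / 2 : ℂ) ^ k * Complex.exp (((phF n k t α ε : ℝ) : ℂ) * I)) *
        ((ρ : ℂ) * Complex.exp (((thF n k α ε : ℝ) : ℂ) * I)) ^ j) :=
    fun ε _ => Summable.mul_left _ (summable_geometric_of_norm_lt_one (hw ε))
  rw [Summable.tsum_finsetSum hsm]
  have htsum : ∀ ε : Fin (n + k) → ({-1, 1} : Finset ℤ),
      (∑' j : ℕ, ((cF n k ε : ℝ) : ℂ) *
          ((1 / (2 * I)) ^ n * (1 / 2 : ℂ) ^ k * Complex.exp (((phF n k t α ε : ℝ) : ℂ) * I)) *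
          ((ρ : ℂ) * Complex.exp (((thF n k α ε : ℝ) : ℂ) * I)) ^ j)
      = ((cF n k ε : ℝ) : ℂ) *
          ((1 / (2 * I)) ^ n * (1 / 2 : ℂ) ^ k * Complex.exp (((phF n k t α ε : ℝ) : ℂ) * I)) *
          (1 - (ρ : ℂ) * Complex.exp (((thF n k α ε : ℝ) : ℂ) * I))⁻¹ := by
    intro ε
    rw [tsum_mul_left, tsum_geometric_of_norm_lt_one (hw ε)]
  rw [Finset.sum_congr rfl (fun ε _ => htsum ε)]
  rw [Complex.ofReal_mul, Complex.ofReal_sum]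
  have hS : (∑ ε : Fin (n + k) → ({-1, 1} : Finset ℤ),
      ((cF n k ε : ℝ) : ℂ) *
        ((1 / (2 * I)) ^ n * (1 / 2 : ℂ) ^ k * Complex.exp (((phF n k t α ε : ℝ) : ℂ) * I)) *
        (1 - (ρ : ℂ) * Complex.exp (((thF n k α ε : ℝ) : ℂ) * I))⁻¹)
      = ((1 / (2 * I)) ^ n * (1 / 2 : ℂ) ^ k) *
        ∑ ε : Fin (n + k) → ({-1, 1} : Finset ℤ),
          ((cF n k ε : ℝ) : ℂ) *
            (Complex.exp (((phF n k t α ε : ℝ) : ℂ) * I) *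
              (1 - (ρ : ℂ) * Complex.exp (((thF n k α ε : ℝ) : ℂ) * I))⁻¹) := by
    rw [Finset.mul_sum]
    exact Finset.sum_congr rfl fun ε _ => by ring
  have hR : (∑ i : Fin (n + k) → ({-1, 1} : Finset ℤ),
      ((cF n k i *
        ((Real.cos (phF n k t α i) - ρ * Real.cos (psF n k t α i)) /
          (1 - 2 * ρ * Real.cos (thF n k α i) + ρ ^ 2)) : ℝ) : ℂ))
      = ∑ i : Fin (n + k) → ({-1, 1} : Finset ℤ),
        ((cF n k i : ℝ) : ℂ) *
          (((Real.cos (phF n k t α i) - ρ * Real.cos (psF n k t α i)) /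
            (1 - 2 * ρ * Real.cos (thF n k α i) + ρ ^ 2) : ℝ) : ℂ) :=
    Finset.sum_congr rfl fun i _ => by rw [Complex.ofReal_mul]
  rw [hS, hR, ← mul_assoc]
  have hC : ((2 ^ (n + k) : ℝ) : ℂ) * ((1 / (2 * I)) ^ n * (1 / 2 : ℂ) ^ k)
      = (((-1 : ℝ) ^ (n / 2) : ℝ) : ℂ) := by
    obtain ⟨m, hm⟩ := hn
    subst hm
    have hI : (I : ℂ) ^ (m + m) = (-1 : ℂ) ^ m := by
      rw [← two_mul, pow_mul, Complex.I_sq]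
    have h1 : ((-1 : ℂ)) ^ m * (-1) ^ m = 1 := by
      rw [← pow_add]; exact Even.neg_one_pow ⟨m, rfl⟩
    rw [show (m + m) / 2 = m by omega]
    push_cast
    rw [div_pow, mul_pow, one_pow, hI]
    rw [pow_add]
    have h2 : (-1 : ℂ) ^ (m * 2) = 1 := by
      rw [pow_mul]; rw [sq]; exact h1
    field_simp
    rw [← mul_pow, sq, h1]
    norm_num
  rw [hC]
  congr 1
  exact pairing n k hn t α ρ hρ

theorem chebyshev_mixed_gen_fun_even (k n : ℕ) (hn : Even n) (t : Fin (n + k) → ℤ)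
    (α : Fin (n + k) → ℝ) (hα : ∀ s : Fin (n + k), (s : ℕ) < n → Real.sin (α s) ≠ 0)
    (ρ : ℝ) (hρ : |ρ| < 1) :
    ∑' j : ℕ, ρ ^ j *
        (∏ s ∈ Finset.univ.filter (fun s : Fin (n + k) => (s : ℕ) < n),
          (Chebyshev.U ℝ ((j : ℤ) + t s)).eval (Real.cos (α s))) *
        (∏ s ∈ Finset.univ.filter (fun s : Fin (n + k) => n ≤ (s : ℕ)),
          (Chebyshev.T ℝ ((j : ℤ) + t s)).eval (Real.cos (α s))) =
      ((-1 : ℝ) ^ (n / 2) /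
          (2 ^ (n + k) *
            ∏ s ∈ Finset.univ.filter (fun s : Fin (n + k) => (s : ℕ) < n), Real.sin (α s))) *
        ∑ ε : Fin (n + k) → ({-1, 1} : Finset ℤ),
          (-1 : ℝ) ^
              (Finset.univ.filter
                (fun l : Fin (n + k) => (l : ℕ) < n ∧ (ε l : ℤ) = 1)).card *
            ((Real.cos
                ((∑ s ∈ Finset.univ.filter (fun s : Fin (n + k) => (s : ℕ) < n),
                    ((ε s : ℤ) : ℝ) * ((t s : ℝ) + 1) * α s) +
                  ∑ s ∈ Finset.univ.filter (fun s : Fin (n + k) => n ≤ (s : ℕ)),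
                    ((ε s : ℤ) : ℝ) * (t s : ℝ) * α s) -
                ρ * Real.cos
                  ((∑ s ∈ Finset.univ.filter (fun s : Fin (n + k) => (s : ℕ) < n),
                      ((ε s : ℤ) : ℝ) * (t s : ℝ) * α s) +
                    ∑ s ∈ Finset.univ.filter (fun s : Fin (n + k) => n ≤ (s : ℕ)),
                      ((ε s : ℤ) : ℝ) * ((t s : ℝ) - 1) * α s)) /
              (1 - 2 * ρ * Real.cos (∑ s, ((ε s : ℤ) : ℝ) * α s) + ρ ^ 2)) := by
  classical
  have hP : (∏ s ∈ Finset.univ.filter (fun s : Fin (n + k) => (s : ℕ) < n),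
      Real.sin (α s)) ≠ 0 :=
    Finset.prod_ne_zero_iff.mpr fun s hs =>
      hα s (Finset.mem_filter.mp hs).2
  have h2 : (2 : ℝ) ^ (n + k) ≠ 0 := by positivity
  have hcore := core k n hn t α ρ hρ
  simp only [cF, phF, psF, thF] at hcore
  rw [div_mul_eq_mul_div, eq_div_iff (mul_ne_zero h2 hP)]
  linear_combination hcore
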